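/- For the 6×6 complex matrices S with rows (1,−1,1,r₁,r₂,r₃), (−1,1,−1,−r₂,−r₃,−r₁), (1,−1,1,r₃,r₁,r₂), (r₁,−r₂,r₃,1,1,1), (r₂,−r₃,r₁,1,1,1), (r₃,−r₁,r₂,1,1,1) and T = diag(1, e^{2πi/3}, e^{4πi/3}, e^{−4πi/9}, e^{8πi/9}, e^{2πi/9}), one has p₊ · p₋ = 9, where p₊ = Σ_j S_{0j}² T_{jj} and p₋ = Σ_j S_{0j}² T_{jj}^{−1}. -/
import Mathlib


/-- `α = e^{iπ/9}`. -/
noncomputable def α : ℂ := Complex.exp (Real.pi * Complex.I / 9)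

noncomputable def r₁ : ℂ := -α - α ^ 2 + α ^ 5
noncomputable def r₂ : ℂ := α + α ^ 2 - α ^ 4
noncomputable def r₃ : ℂ := α ^ 4 - α ^ 5

/-- The 6×6 matrix with rows `(1,−1,1,r₁,r₂,r₃)`, `(−1,1,−1,−r₂,−r₃,−r₁)`,
`(1,−1,1,r₃,r₁,r₂)`, `(r₁,−r₂,r₃,1,1,1)`, `(r₂,−r₃,r₁,1,1,1)`, `(r₃,−r₁,r₂,1,1,1)`. -/
noncomputable def S : Matrix (Fin 6) (Fin 6) ℂ :=
  !![1, -1, 1, r₁, r₂, r₃;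
     -1, 1, -1, -r₂, -r₃, -r₁;
     1, -1, 1, r₃, r₁, r₂;
     r₁, -r₂, r₃, 1, 1, 1;
     r₂, -r₃, r₁, 1, 1, 1;
     r₃, -r₁, r₂, 1, 1, 1]

/-- `T = diag(1, e^{2πi/3}, e^{4πi/3}, e^{−4πi/9}, e^{8πi/9}, e^{2πi/9})`. -/
noncomputable def T : Matrix (Fin 6) (Fin 6) ℂ :=
  Matrix.diagonal ![1, Complex.exp (2 * Real.pi * Complex.I / 3),
    Complex.exp (4 * Real.pi * Complex.I / 3),
    Complex.exp (-4 * Real.pi * Complex.I / 9),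
    Complex.exp (8 * Real.pi * Complex.I / 9),
    Complex.exp (2 * Real.pi * Complex.I / 9)]

/-- `p₊ = Σ_j S_{0j}² T_{jj}`. -/
noncomputable def pPlus : ℂ := ∑ j : Fin 6, (S 0 j) ^ 2 * T j j

/-- `p₋ = Σ_j S_{0j}² T_{jj}⁻¹`. -/
noncomputable def pMinus : ℂ := ∑ j : Fin 6, (S 0 j) ^ 2 * (T j j)⁻¹


lemma alpha_pow (n : ℕ) (x : ℂ) (h : (n : ℂ) * (Real.pi * Complex.I / 9) = x) :
    Complex.exp x = α ^ n := by
  rw [α, ← Complex.exp_nat_mul, h]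

lemma h6 : α ^ 6 - α ^ 3 + 1 = 0 := by
  have h3 : α ^ 3 = Complex.exp ((Real.pi / 3 : ℝ) * Complex.I) := by
    rw [α, ← Complex.exp_nat_mul]
    congr 1
    push_cast
    ring
  have hsq : ((Real.sqrt 3 : ℝ) : ℂ) ^ 2 = 3 := by
    norm_cast
    rw [Real.sq_sqrt] <;> norm_num
  have h66 : α ^ 6 = (α ^ 3) ^ 2 := by ring
  rw [h66, h3, Complex.exp_mul_I, ← Complex.ofReal_cos, ← Complex.ofReal_sin,
    Real.cos_pi_div_three, Real.sin_pi_div_three]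
  push_cast
  linear_combination (Complex.I ^ 2 / 4) * hsq + (3 / 4 : ℂ) * Complex.I_sq

lemma h18 : α ^ 18 = 1 := by
  have h9 : α ^ 9 = -1 := by linear_combination (α ^ 3 + 1) * h6
  linear_combination (α ^ 9 - 1) * h9

lemma inv_pow_alpha (k m : ℕ) (h : k + m = 18) : (α ^ k)⁻¹ = α ^ m := by
  refine inv_eq_of_mul_eq_one_right ?_
  rw [← pow_add, h, h18]

theorem pPlus_mul_pMinus : pPlus * pMinus = 9 := by
  have e6 : Complex.exp (2 * (Real.pi : ℂ) * Complex.I / 3) = α ^ 6 :=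
    alpha_pow 6 _ (by push_cast; ring)
  have e12 : Complex.exp (4 * (Real.pi : ℂ) * Complex.I / 3) = α ^ 12 :=
    alpha_pow 12 _ (by push_cast; ring)
  have e8 : Complex.exp (8 * (Real.pi : ℂ) * Complex.I / 9) = α ^ 8 :=
    alpha_pow 8 _ (by push_cast; ring)
  have e2 : Complex.exp (2 * (Real.pi : ℂ) * Complex.I / 9) = α ^ 2 :=
    alpha_pow 2 _ (by push_cast; ring)
  have e4 : Complex.exp (-4 * (Real.pi : ℂ) * Complex.I / 9) = α ^ 14 := by
    have h : (-4 * (Real.pi : ℂ) * Complex.I / 9) = -(4 * (Real.pi : ℂ) * Complex.I / 9) := by ring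
    rw [h, Complex.exp_neg, alpha_pow 4 _ (by push_cast; ring), inv_pow_alpha 4 14 rfl]
  simp only [pPlus, pMinus, S, T, Fin.sum_univ_six, Matrix.diagonal_apply_eq,
    Matrix.cons_val_zero, Matrix.cons_val_one, Matrix.head_cons, Matrix.cons_val',
    Matrix.cons_val_fin_one, Matrix.empty_val', Matrix.head_fin_const,
    Matrix.of_apply, Matrix.cons_val_two, Matrix.tail_cons, Matrix.cons_val_three,
    Matrix.cons_val_four, Matrix.cons_val_succ]
  rw [e6, e12, e8, e2, e4]
  rw [show (![(1:ℂ), -1, 1, r₁, r₂, r₃] : Fin 6 → ℂ) 5 = r₃ from rfl,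
    show (![(1:ℂ), α ^ 6, α ^ 12, α ^ 14, α ^ 8, α ^ 2] : Fin 6 → ℂ) 5 = α ^ 2 from rfl]
  rw [inv_pow_alpha 6 12 rfl, inv_pow_alpha 12 6 rfl,
    inv_pow_alpha 14 4 rfl, inv_pow_alpha 8 10 rfl, inv_pow_alpha 2 16 rfl]
  simp only [r₁, r₂, r₃, inv_one]
  linear_combination ((-8) * (1:ℂ) + (-8) * α^3 + (3) * α^6 + (2) * α^7 + (1) * α^8 + (11) * α^9 + (2) * α^10 + (-1) * α^11 + (15) * α^12 + (2) * α^13 + (-1) * α^14 + (2) * α^15 + (2) * α^16 + (4) * α^17 + (-1) * α^18 + (4) * α^19 + (-4) * α^20 + (-17) * α^21 + (2) * α^23 + (13) * α^24 + (-6) * α^26 + (-12) * α^28 + (4) * α^29 + (11) * α^30 + (-4) * α^31 + (4) * α^32 + (-3) * α^33 + (-4) * α^35 + (2) * α^36 + (2) * α^37 + (-3) * α^38 + (3) * α^39 + (-1) * α^41 + (1) * α^42 + (-2) * α^43 + (1) * α^44) * h6
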